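/- Let k ≥ 1, let (f_1,…,f_k) be a k-fuse prefix, and let t = (ν, T) be any barred state. Define the barred state s = (μ, S) by μ_i = f_i for 1 ≤ i ≤ k, μ_{k+i} = ν_i for i ≥ 1, and S = {1,…,k} ∪ {k+i : i ∈ T}. Then for every finite sequence (i_1,…,i_m) of positive integers: (i_1,…,i_m) is playable from t if and only if (k+i_1,…,k+i_m) is playable from s. Moreover, in that case, writing (ν', T') for the state obtained from t by playing (i_1,…,i_m) and (μ', S') for the state obtained from s by playing (k+i_1,…,k+i_m), one has μ'_i = f_i for 1 ≤ i ≤ k−1, μ'_k ≥ f_k (so that (μ'_1,…,μ'_k) is again a k-fuse prefix), μ'_{k+i} = ν'_i for all i ≥ 1, and S' = {1,…,k} ∪ {k+i : i ∈ T'}. -/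

import Mathlib

/-- A barred state: a sequence `μ` of natural numbers indexed by the positive
integers (the value at `0` is irrelevant) together with a set `S` of barred
positions, all positive and with `μ_j ≠ 0` for `j ∈ S`. -/
structure BarredState where
  mu : ℕ → ℕ
  bars : Set ℕ
  bars_pos : ∀ j ∈ bars, 1 ≤ j
  bars_ne : ∀ j ∈ bars, mu j ≠ 0

/-- The sequence obtained from `μ` by the move `R_j`:
`μ'_i = μ_i` for `i < j-1`, `μ'_{j-1} = μ_{j-1} + μ_j`, and `μ'_i = μ_{i+1}` for `i ≥ j`. -/
def moveMu (mu : ℕ → ℕ) (j : ℕ) : ℕ → ℕ := fun i =>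
  if i < j - 1 then mu i
  else if i = j - 1 then mu (j - 1) + mu j
  else mu (i + 1)

/-- The move `R_j` on barred states: the new barred set is
`{i : 1 ≤ i ≤ j-1, μ'_i ≠ 0} ∪ {i ≥ j : μ'_i ≠ 0 and μ_j + ⋯ + μ_i < 3}`. -/
def BarredState.move (s : BarredState) (j : ℕ) : BarredState where
  mu := moveMu s.mu j
  bars :=
    {i | 1 ≤ i ∧ i ≤ j - 1 ∧ moveMu s.mu j i ≠ 0} ∪
    {i | 1 ≤ i ∧ j ≤ i ∧ moveMu s.mu j i ≠ 0 ∧ (∑ t ∈ Finset.Icc j i, s.mu t) < 3}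
  bars_pos := by
    rintro i (⟨h, -, -⟩ | ⟨h, -, -, -⟩) <;> exact h
  bars_ne := by
    rintro i (⟨-, -, h⟩ | ⟨-, -, h, -⟩) <;> exact h

/-- A finite sequence `(j_1, …, j_m)` is playable from `s` if `j_1` is barred in `s`
and `(j_2, …, j_m)` is playable from `R_{j_1}(s)`. -/
def PlayableSeq : BarredState → List ℕ → Prop
  | _, [] => True
  | s, j :: js => j ∈ s.bars ∧ PlayableSeq (s.move j) js

/-- The state obtained by playing a sequence of moves. -/
def playAll : BarredState → List ℕ → BarredState
  | s, [] => s
  | s, j :: js => playAll (s.move j) js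

/-- `(f_1, …, f_k)` is a `k`-fuse prefix: `f_i ∈ {1,2}` for `1 ≤ i ≤ k-1`, `f_k ≥ 3`,
and no two consecutive entries equal `1`. -/
def IsFusePrefix (k : ℕ) (f : ℕ → ℕ) : Prop :=
  (∀ i, 1 ≤ i → i ≤ k - 1 → f i = 1 ∨ f i = 2) ∧
  3 ≤ f k ∧
  (∀ i, 1 ≤ i → i ≤ k - 1 → ¬(f i = 1 ∧ f (i + 1) = 1))

/-- A barred state has a `k`-fuse if `(μ_1, …, μ_k)` is a `k`-fuse prefix and
positions `1, …, k` are all barred. -/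
def HasFuse (k : ℕ) (s : BarredState) : Prop :=
  IsFusePrefix k s.mu ∧ ∀ i, 1 ≤ i → i ≤ k → i ∈ s.bars

/-- Prepending a `k`-fuse prefix to a state `t` gives a state `s` in which play
beyond position `k` mirrors play in `t`: `(i_1,…,i_m)` is playable from `t` iff
`(k+i_1,…,k+i_m)` is playable from `s`, and the resulting state again consists of a
`k`-fuse prefix (with the same entries except possibly a larger `k`-th entry)
followed by the result of playing in `t`, with correspondingly shifted bars. -/
lemma moveMu_lt {mu : ℕ → ℕ} {j i : ℕ} (h : i < j - 1) : moveMu mu j i = mu i := by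
  simp [moveMu, h]

lemma shift_moveMu (k : ℕ) (t s : BarredState)
    (hmu2 : ∀ i, 1 ≤ i → s.mu (k + i) = t.mu i) (j : ℕ) (hj : 1 ≤ j)
    (i : ℕ) (hi : 1 ≤ i) : moveMu s.mu (k + j) (k + i) = moveMu t.mu j i := by
  unfold moveMu
  rcases lt_trichotomy i (j - 1) with h | h | h
  · rw [if_pos (by omega), if_pos h, hmu2 i hi]
  · rw [if_neg (by omega), if_pos (by omega), if_neg (by omega), if_pos h]
    have he : k + j - 1 = k + (j - 1) := by omega
    rw [he, hmu2 (j - 1) (by omega), hmu2 j hj]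
  · rw [if_neg (by omega), if_neg (by omega), if_neg (by omega), if_neg (by omega)]
    exact hmu2 (i + 1) (by omega)

lemma shift_sum (k : ℕ) (t s : BarredState)
    (hmu2 : ∀ i, 1 ≤ i → s.mu (k + i) = t.mu i) (j i : ℕ) (hj : 1 ≤ j) :
    ∑ x ∈ Finset.Icc (k + j) (k + i), s.mu x = ∑ x ∈ Finset.Icc j i, t.mu x := by
  rw [← Finset.map_add_left_Icc, Finset.sum_map]
  refine Finset.sum_congr rfl fun x hx => ?_
  simp only [addLeftEmbedding_apply]
  exact hmu2 x (le_trans hj (Finset.mem_Icc.mp hx).1)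

lemma key_step (k : ℕ) (hk : 1 ≤ k) (f : ℕ → ℕ) (hf : IsFusePrefix k f)
    (t s : BarredState)
    (hmu1 : ∀ i, 1 ≤ i → i ≤ k - 1 → s.mu i = f i)
    (hmuk : f k ≤ s.mu k)
    (hmu2 : ∀ i, 1 ≤ i → s.mu (k + i) = t.mu i)
    (hS : s.bars = {i | 1 ≤ i ∧ i ≤ k} ∪ (fun i => k + i) '' t.bars)
    (j : ℕ) (hj : 1 ≤ j) :
    (j ∈ t.bars ↔ (k + j) ∈ s.bars) ∧
    (∀ i, 1 ≤ i → i ≤ k - 1 → (s.move (k + j)).mu i = f i) ∧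
    f k ≤ (s.move (k + j)).mu k ∧
    (∀ i, 1 ≤ i → (s.move (k + j)).mu (k + i) = (t.move j).mu i) ∧
    (s.move (k + j)).bars =
      {i | 1 ≤ i ∧ i ≤ k} ∪ (fun i => k + i) '' (t.move j).bars := by
  obtain ⟨hf1, hf2, hf3⟩ := hf
  have hfne : ∀ i, 1 ≤ i → i ≤ k - 1 → f i ≠ 0 := by
    intro i h1 h2; rcases hf1 i h1 h2 with h | h <;> omega
  have hshift : ∀ i, 1 ≤ i → moveMu s.mu (k + j) (k + i) = moveMu t.mu j i :=
    fun i hi => shift_moveMu k t s hmu2 j hj i hi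
  have hMlow : ∀ i, 1 ≤ i → i ≤ k - 1 → moveMu s.mu (k + j) i = f i := by
    intro i h1 h2
    rw [moveMu_lt (by omega)]
    exact hmu1 i h1 h2
  have hMk : f k ≤ moveMu s.mu (k + j) k := by
    unfold moveMu
    rcases eq_or_lt_of_le hj with h | h
    · rw [if_neg (by omega), if_pos (by omega)]
      have he : k + j - 1 = k := by omega
      rw [he]
      exact le_trans hmuk (Nat.le_add_right _ _)
    · rw [if_pos (by omega)]
      exact hmuk
  have hMne : ∀ i, 1 ≤ i → i ≤ k → moveMu s.mu (k + j) i ≠ 0 := by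
    intro i h1 h2
    rcases eq_or_lt_of_le h2 with h | h
    · subst h; omega
    · rw [hMlow i h1 (by omega)]
      exact hfne i h1 (by omega)
  have hbar : j ∈ t.bars ↔ (k + j) ∈ s.bars := by
    rw [hS]
    simp only [Set.mem_union, Set.mem_setOf_eq, Set.mem_image]
    constructor
    · intro h; exact Or.inr ⟨j, h, rfl⟩
    · rintro (⟨-, h⟩ | ⟨x, hx, hxe⟩)
      · omega
      · have hxj : x = j := by omega
        rwa [← hxj]
  refine ⟨hbar, hMlow, hMk, hshift, ?_⟩
  ext i
  simp only [BarredState.move, Set.mem_union, Set.mem_setOf_eq, Set.mem_image]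
  constructor
  · rintro (⟨h1, h2, h3⟩ | ⟨h1, h2, h3, h4⟩)
    · by_cases hik : i ≤ k
      · exact Or.inl ⟨h1, hik⟩
      · obtain ⟨i', rfl⟩ : ∃ i', i = k + i' := ⟨i - k, by omega⟩
        have hi' : 1 ≤ i' := by omega
        exact Or.inr ⟨i', Or.inl ⟨hi', by omega, by rw [← hshift i' hi']; exact h3⟩, rfl⟩
    · obtain ⟨i', rfl⟩ : ∃ i', i = k + i' := ⟨i - k, by omega⟩
      have hi' : 1 ≤ i' := by omega
      exact Or.inr ⟨i', Or.inr ⟨hi', by omega,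
        by rw [← hshift i' hi']; exact h3,
        by rw [← shift_sum k t s hmu2 j i' hj]; exact h4⟩, rfl⟩
  · rintro (⟨h1, h2⟩ | ⟨i', (⟨a, b, c⟩ | ⟨a, b, c, d⟩), rfl⟩)
    · exact Or.inl ⟨h1, by omega, hMne i h1 h2⟩
    · exact Or.inl ⟨by omega, by omega, by rw [hshift i' a]; exact c⟩
    · exact Or.inr ⟨by omega, by omega, by rw [hshift i' a]; exact c,
        by rw [shift_sum k t s hmu2 j i' hj]; exact d⟩

lemma fuse_of (k : ℕ) (hk : 1 ≤ k) (f g : ℕ → ℕ) (hf : IsFusePrefix k f)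
    (h1 : ∀ i, 1 ≤ i → i ≤ k - 1 → g i = f i) (h2 : f k ≤ g k) : IsFusePrefix k g := by
  obtain ⟨hf1, hf2, hf3⟩ := hf
  refine ⟨fun i hi hik => by rw [h1 i hi hik]; exact hf1 i hi hik, by omega, ?_⟩
  rintro i hi hik ⟨ha, hb⟩
  rcases eq_or_lt_of_le (show i + 1 ≤ k by omega) with h | h
  · have h3 : 3 ≤ g (i + 1) := by rw [h]; omega
    omega
  · exact hf3 i hi hik ⟨by rw [← h1 i hi hik]; exact ha,
      by rw [← h1 (i + 1) (by omega) (by omega)]; exact hb⟩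

lemma aux_main (k : ℕ) (hk : 1 ≤ k) (f : ℕ → ℕ) (hf : IsFusePrefix k f) :
    ∀ (js : List ℕ) (t s : BarredState),
      (∀ i, 1 ≤ i → i ≤ k - 1 → s.mu i = f i) → f k ≤ s.mu k →
      (∀ i, 1 ≤ i → s.mu (k + i) = t.mu i) →
      s.bars = {i | 1 ≤ i ∧ i ≤ k} ∪ (fun i => k + i) '' t.bars →
      (∀ j ∈ js, 1 ≤ j) →
      ((PlayableSeq t js ↔ PlayableSeq s (js.map (k + ·))) ∧
        (PlayableSeq t js →
          (∀ i, 1 ≤ i → i ≤ k - 1 → (playAll s (js.map (k + ·))).mu i = f i) ∧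
          f k ≤ (playAll s (js.map (k + ·))).mu k ∧
          (∀ i, 1 ≤ i → (playAll s (js.map (k + ·))).mu (k + i) = (playAll t js).mu i) ∧
          (playAll s (js.map (k + ·))).bars =
            {i | 1 ≤ i ∧ i ≤ k} ∪ (fun i => k + i) '' (playAll t js).bars)) := by
  intro js
  induction js with
  | nil =>
    intro t s hmu1 hmuk hmu2 hS _
    exact ⟨Iff.rfl, fun _ => ⟨hmu1, hmuk, hmu2, hS⟩⟩
  | cons j rest ih =>
    intro t s hmu1 hmuk hmu2 hS hpos
    have hj : 1 ≤ j := hpos j List.mem_cons_self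
    obtain ⟨hbar, h1, h2, h3, h4⟩ := key_step k hk f hf t s hmu1 hmuk hmu2 hS j hj
    have ihh := ih (t.move j) (s.move (k + j)) h1 h2 h3 h4
      (fun x hx => hpos x (List.mem_cons_of_mem _ hx))
    refine ⟨and_congr hbar ihh.1, ?_⟩
    rintro ⟨hjb, hrest⟩
    exact ihh.2 hrest

theorem stmt8 (k : ℕ) (hk : 1 ≤ k) (f : ℕ → ℕ) (hf : IsFusePrefix k f)
    (t s : BarredState)
    (hmu1 : ∀ i, 1 ≤ i → i ≤ k → s.mu i = f i)
    (hmu2 : ∀ i, 1 ≤ i → s.mu (k + i) = t.mu i)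
    (hS : s.bars = {i | 1 ≤ i ∧ i ≤ k} ∪ (fun i => k + i) '' t.bars) :
    ∀ js : List ℕ, (∀ j ∈ js, 1 ≤ j) →
      ((PlayableSeq t js ↔ PlayableSeq s (js.map (k + ·))) ∧
        (PlayableSeq t js →
          (∀ i, 1 ≤ i → i ≤ k - 1 → (playAll s (js.map (k + ·))).mu i = f i) ∧
          f k ≤ (playAll s (js.map (k + ·))).mu k ∧
          IsFusePrefix k (playAll s (js.map (k + ·))).mu ∧
          (∀ i, 1 ≤ i →
            (playAll s (js.map (k + ·))).mu (k + i) = (playAll t js).mu i) ∧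
          (playAll s (js.map (k + ·))).bars =
            {i | 1 ≤ i ∧ i ≤ k} ∪ (fun i => k + i) '' (playAll t js).bars)) := by
  intro js hpos
  obtain ⟨h1, h2⟩ := aux_main k hk f hf js t s
    (fun i hi hik => hmu1 i hi (by omega))
    (le_of_eq (hmu1 k hk le_rfl).symm) hmu2 hS hpos
  refine ⟨h1, fun hp => ?_⟩
  obtain ⟨a, b, c, d⟩ := h2 hp
  exact ⟨a, b, fuse_of k hk f _ hf a b, c, d⟩
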